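/- Let 𝔽_q be a finite field, A = 𝔽_q[T], K = 𝔽_q(T), let 𝔭 ∈ A be a monic irreducible polynomial, and let r ≥ 1. Suppose a, b ∈ A are monic with gcd(a, 𝔭) = gcd(b, 𝔭) = 1 and 0 ≤ i, j ≤ r. If the points (a : 𝔭^i) and (b : 𝔭^j) of ℙ¹(K) lie in the same Γ₀(𝔭^r)-orbit, then i = j. (Thus the height 𝔭^i of a cusp of X₀(𝔭^r) is well defined.) -/
import Mathlib

set_option synthInstance.maxHeartbeats 400000 in
/-- If two points `(a : 𝔭^i)` and `(b : 𝔭^j)` of `ℙ¹(K)`, with `a, b` monic and coprime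
to the monic irreducible `𝔭`, and `0 ≤ i, j ≤ r`, lie in the same `Γ₀(𝔭^r)`-orbit,
then `i = j`: the height of a cusp of `X₀(𝔭^r)` is well defined. -/
theorem height_well_defined (F : Type*) [Field F] [Fintype F]
    (p : Polynomial F) (hp : p.Monic) (hirr : Irreducible p) (r : ℕ) (hr : 1 ≤ r)
    (a b : Polynomial F) (ha : a.Monic) (hb : b.Monic)
    (hca : IsCoprime a p) (hcb : IsCoprime b p)
    (i j : ℕ) (hi : i ≤ r) (hj : j ≤ r)
    (horbit : ∃ γ : Matrix (Fin 2) (Fin 2) (Polynomial F),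
      IsUnit γ.det ∧ p ^ r ∣ γ 1 0 ∧
      ∃ c : RatFunc F, c ≠ 0 ∧
        (γ.map (algebraMap (Polynomial F) (RatFunc F))).mulVec
            ![algebraMap (Polynomial F) (RatFunc F) a,
              algebraMap (Polynomial F) (RatFunc F) (p ^ i)] =
          c • ![algebraMap (Polynomial F) (RatFunc F) b,
                algebraMap (Polynomial F) (RatFunc F) (p ^ j)]) :
    i = j := by
  obtain ⟨γ, hu, hdvd, c, hc, heq⟩ := horbit
  set φ := algebraMap (Polynomial F) (RatFunc F) with hφ
  have hprime : Prime p := hirr.prime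
  have hp0 : p ≠ 0 := hprime.ne_zero
  have hpg : p ∣ γ 1 0 := dvd_trans (dvd_pow_self p (by omega)) hdvd
  have hpa : ¬ p ∣ a := fun h => hirr.not_isUnit (hca.isUnit_of_dvd' h dvd_rfl)
  have hpb : ¬ p ∣ b := fun h => hirr.not_isUnit (hcb.isUnit_of_dvd' h dvd_rfl)
  have hdet : γ.det = γ 0 0 * γ 1 1 - γ 0 1 * γ 1 0 := Matrix.det_fin_two γ
  have hpd : ¬ p ∣ γ 1 1 := by
    intro h
    refine hirr.not_isUnit (isUnit_of_dvd_unit ?_ hu)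
    rw [hdet]
    exact dvd_sub (Dvd.dvd.mul_left h _) (Dvd.dvd.mul_left hpg _)
  have h0 := congrFun heq 0
  have h1 := congrFun heq 1
  simp only [Matrix.mulVec, dotProduct, Fin.sum_univ_two, Matrix.map_apply,
    Matrix.cons_val_zero, Matrix.cons_val_one, Matrix.head_cons, Pi.smul_apply,
    smul_eq_mul] at h0 h1
  have key : p ^ j * (γ 0 0 * a + γ 0 1 * p ^ i) = b * (γ 1 0 * a + γ 1 1 * p ^ i) := by
    apply IsFractionRing.injective (Polynomial F) (RatFunc F)
    simp only [map_mul, map_add, map_pow]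
    simp only [map_mul, map_add, map_pow] at h0 h1
    linear_combination (φ p) ^ j * h0 - (φ b) * h1
  rcases lt_trichotomy i j with hij | hij | hij
  · -- i < j : contradiction
    exfalso
    have h1dvd : p ^ (i + 1) ∣ b * (γ 1 0 * a + γ 1 1 * p ^ i) := by
      rw [← key]
      exact dvd_mul_of_dvd_left (pow_dvd_pow p (by omega)) _
    have h2 : p ^ (i + 1) ∣ b * (γ 1 0 * a) :=
      Dvd.dvd.mul_left (dvd_trans (dvd_trans (pow_dvd_pow p (by omega)) hdvd)
        (Dvd.dvd.mul_right dvd_rfl a)) b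
    have h3 : p ^ (i + 1) ∣ b * (γ 1 1 * p ^ i) := by
      have := dvd_sub h1dvd h2
      rwa [mul_add, add_sub_cancel_left] at this
    have h4 : p ^ i * p ∣ p ^ i * (b * γ 1 1) := by
      rw [← pow_succ] ; refine dvd_trans h3 (dvd_of_eq ?_) ; ring
    have h5 : p ∣ b * γ 1 1 := (mul_dvd_mul_iff_left (pow_ne_zero i hp0)).mp h4
    rcases hprime.dvd_mul.mp h5 with h | h
    · exact hpb h
    · exact hpd h
  · exact hij
  · -- i > j : contradiction
    exfalso
    have h1dvd : p ^ i ∣ b * (γ 1 0 * a + γ 1 1 * p ^ i) := by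
      rw [mul_add]
      refine dvd_add ?_ (Dvd.dvd.mul_left (Dvd.dvd.mul_left dvd_rfl _) b)
      exact Dvd.dvd.mul_left (Dvd.dvd.mul_right (dvd_trans (pow_dvd_pow p hi) hdvd) a) b
    rw [← key] at h1dvd
    have h4 : p ^ j * p ^ (i - j) ∣ p ^ j * (γ 0 0 * a + γ 0 1 * p ^ i) := by
      rw [← pow_add]
      exact dvd_trans (pow_dvd_pow p (by omega)) h1dvd
    have h5 : p ∣ γ 0 0 * a + γ 0 1 * p ^ i :=
      dvd_trans (dvd_pow_self p (by omega))
        ((mul_dvd_mul_iff_left (pow_ne_zero j hp0)).mp h4)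
    have h6 : p ∣ γ 0 0 * a := by
      have h7 : p ∣ γ 0 1 * p ^ i := Dvd.dvd.mul_left (dvd_pow_self p (by omega)) _
      have := dvd_sub h5 h7
      rwa [add_sub_cancel_right] at this
    have h8 : p ∣ γ 0 0 := by
      rcases hprime.dvd_mul.mp h6 with h | h
      · exact h
      · exact absurd h hpa
    refine hirr.not_isUnit (isUnit_of_dvd_unit ?_ hu)
    rw [hdet]
    exact dvd_sub (Dvd.dvd.mul_right h8 _) (Dvd.dvd.mul_left hpg _)
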